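/- For every ε > 0 there exists M > 0 such that for every real t ≥ 1/2 + ε and every real y with |y| > M, Re[S₂(t + iy)] > 0; equivalently, Re[ψ₁(t + iy)] > 0. (In particular, for such y the function a ↦ log|Γ(a + iy)| is convex on [1/2 + ε, ∞).) -/

import Mathlib

open Complex

/-- `S j z = ∑_{k=0}^∞ 1/(z+k)^j`; in particular `ψ₁ = S₂`. -/
noncomputable def S (j : ℕ) (z : ℂ) : ℂ := ∑' k : ℕ, 1 / (z + k) ^ j

private lemma hasSum_telescope_aux {g : ℕ → ℂ}
    (h0 : Filter.Tendsto g Filter.atTop (nhds 0))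
    (hs : Summable (fun k => g k - g (k + 1))) :
    HasSum (fun k => g k - g (k + 1)) (g 0) := by
  obtain ⟨s, hS⟩ := hs
  have h1 := hS.tendsto_sum_nat
  have heq : (fun n => ∑ i ∈ Finset.range n, (g i - g (i + 1))) = fun n => g 0 - g n := by
    funext n; exact Finset.sum_range_sub' g n
  have h2 : Filter.Tendsto (fun n => ∑ i ∈ Finset.range n, (g i - g (i + 1)))
      Filter.atTop (nhds (g 0 - 0)) := by
    rw [heq]; exact tendsto_const_nhds.sub h0
  have hs0 : s = g 0 := by
    have := tendsto_nhds_unique h1 h2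
    simpa using this
  rwa [hs0] at hS

private lemma key_id (a : ℂ) (h0 : a ≠ 0) (h1 : a + 1 ≠ 0) (h2 : a + 2 ≠ 0) :
    1 / a ^ 2 = (1 / a - 1 / (a + 1))
      + (1 / 2) * (1 / (a * (a + 1)) - 1 / ((a + 1) * (a + 2)))
      + 2 / (a ^ 2 * (a + 1) * (a + 2)) := by
  have hA : a * (a + 1) ≠ 0 := mul_ne_zero h0 h1
  have hB : a * (a + 1) * (a + 2) ≠ 0 := mul_ne_zero hA h2
  have hC : a ^ 2 * (a + 1) * (a + 2) ≠ 0 :=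
    mul_ne_zero (mul_ne_zero (pow_ne_zero 2 h0) h1) h2
  have e1 : 1 / a - 1 / (a + 1) = 1 / (a * (a + 1)) := by field_simp; ring
  have e2 : 1 / (a * (a + 1)) - 1 / ((a + 1) * (a + 2)) = 2 / (a * (a + 1) * (a + 2)) := by
    field_simp; ring
  have e3 : (1 / 2 : ℂ) * (2 / (a * (a + 1) * (a + 2))) = 1 / (a * (a + 1) * (a + 2)) := by
    rw [show (1/2 : ℂ) * (2 / (a * (a + 1) * (a + 2)))
        = (2/2) * (1 / (a * (a + 1) * (a + 2))) from by ring,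
      show (2:ℂ)/2 = 1 from by norm_num, one_mul]
  rw [e1, e2, e3, div_add_div _ _ hA hB, div_add_div _ _ (mul_ne_zero hA hB) hC,
    div_eq_div_iff (pow_ne_zero 2 h0) (mul_ne_zero (mul_ne_zero hA hB) hC)]
  ring

set_option maxHeartbeats 1000000 in
/-- For every `ε > 0` there exists `M > 0` such that for all real `t ≥ 1/2 + ε` and
all real `y` with `|y| > M`, `Re[S₂(t+iy)] > 0`, i.e. `Re[ψ₁(t+iy)] > 0`. -/
theorem re_psi1_pos (ε : ℝ) (hε : 0 < ε) :
    ∃ M : ℝ, 0 < M ∧ ∀ t y : ℝ, 1 / 2 + ε ≤ t → M < |y| →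
      0 < (S 2 ((t : ℂ) + y * I)).re := by
  refine ⟨4 / ε + 1, by positivity, ?_⟩
  intro t y ht hy
  set w := |y| with hwdef
  have h4ε : 0 < 4 / ε := by positivity
  have hw1 : (1 : ℝ) < w := by linarith
  have hwε : 4 / ε < w - 1 := by linarith
  have ht0 : 0 < t := by linarith
  set z : ℂ := (t : ℂ) + y * I with hzdef
  have hzre : z.re = t := by simp [hzdef]
  have hzim : z.im = y := by simp [hzdef]
  have hre : ∀ k : ℕ, (z + (k : ℂ)).re = t + k := by intro k; simp [hzre]
  have him : ∀ k : ℕ, (z + (k : ℂ)).im = y := by intro k; simp [hzim]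
  have hcpos : ∀ k : ℕ, 0 < (t + k) ^ 2 + y ^ 2 := by
    intro k
    have : 0 < t + (k : ℝ) := by positivity
    positivity
  have hnsq : ∀ k : ℕ, Complex.normSq (z + (k : ℂ)) = (t + k) ^ 2 + y ^ 2 := by
    intro k; rw [Complex.normSq_apply, hre, him]; ring
  have hzk_ne : ∀ k : ℕ, z + (k : ℂ) ≠ 0 := by
    intro k hzeq
    have h1 : (z + (k : ℂ)).re = 0 := by rw [hzeq]; simp
    rw [hre] at h1
    have : 0 < t + (k : ℝ) := by positivity
    linarith
  have hnorm : ∀ k : ℕ, ‖z + (k : ℂ)‖ = Real.sqrt ((t + k) ^ 2 + y ^ 2) := by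
    intro k; rw [Complex.norm_def, hnsq]
  have hnorm_mono : ∀ k l : ℕ, k ≤ l → ‖z + (k : ℂ)‖ ≤ ‖z + (l : ℂ)‖ := by
    intro k l hkl
    rw [hnorm, hnorm]
    apply Real.sqrt_le_sqrt
    have hkl' : (k : ℝ) ≤ l := by exact_mod_cast hkl
    nlinarith [Nat.cast_nonneg (α := ℝ) k]
  have hnorm_sq : ∀ k : ℕ, ‖z + (k : ℂ)‖ ^ 2 = (t + k) ^ 2 + y ^ 2 := by
    intro k; rw [hnorm, Real.sq_sqrt (le_of_lt (hcpos k))]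
  have hnorm_pos : ∀ k : ℕ, 0 < ‖z + (k : ℂ)‖ := by
    intro k; exact norm_pos_iff.mpr (hzk_ne k)
  have hnorm_one : ∀ k : ℕ, 1 ≤ ‖z + (k : ℂ)‖ := by
    intro k
    have h1 : |(z + (k : ℂ)).im| ≤ ‖z + (k : ℂ)‖ := Complex.abs_im_le_norm _
    rw [him] at h1
    calc (1:ℝ) ≤ w := hw1.le
      _ = |y| := hwdef
      _ ≤ _ := h1
  -- pieces
  set g₁ : ℕ → ℂ := fun k => 1 / (z + (k : ℂ)) with hg₁
  set g₂ : ℕ → ℂ := fun k => 1 / ((z + (k : ℂ)) * (z + ((k + 1 : ℕ) : ℂ))) with hg₂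
  set h : ℕ → ℂ := fun k =>
    2 / ((z + (k : ℂ)) ^ 2 * (z + ((k + 1 : ℕ) : ℂ)) * (z + ((k + 2 : ℕ) : ℂ))) with hh
  have hcast1 : ∀ k : ℕ, z + ((k + 1 : ℕ) : ℂ) = z + (k : ℂ) + 1 := by
    intro k; push_cast; ring
  have hcast2 : ∀ k : ℕ, z + ((k + 2 : ℕ) : ℂ) = z + (k : ℂ) + 2 := by
    intro k; push_cast; ring
  -- telescoping real majorant
  set b : ℕ → ℝ := fun k => 1 / (t + k - 1 + w) with hb
  have hbden : ∀ k : ℕ, 0 < t + k - 1 + w := by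
    intro k
    have : (0:ℝ) ≤ k := Nat.cast_nonneg k
    linarith
  have hbpos : ∀ k : ℕ, 0 < b k := fun k => by
    simpa [hb] using one_div_pos.mpr (hbden k)
  have hbmono : ∀ k : ℕ, b (k + 1) ≤ b k := by
    intro k
    apply one_div_le_one_div_of_le (hbden k)
    push_cast; linarith
  have hmaj : ∀ k : ℕ, 1 / ((t + k) ^ 2 + y ^ 2) ≤ 2 * (b k - b (k + 1)) := by
    intro k
    have hd1 : 0 < t + k - 1 + w := hbden k
    have hd2' : t + ((k + 1 : ℕ) : ℝ) - 1 + w = t + k + w := by push_cast; ring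
    have hd2 : 0 < t + k + w := by rw [← hd2']; exact hbden (k + 1)
    have hdiff : b k - b (k + 1) = 1 / ((t + k - 1 + w) * (t + k + w)) := by
      rw [hb]
      simp only
      rw [hd2', div_sub_div _ _ (ne_of_gt hd1) (ne_of_gt hd2)]
      congr 1
      ring
    rw [hdiff, mul_one_div, div_le_div_iff₀ (hcpos k) (mul_pos hd1 hd2)]
    have hyw : y ^ 2 = w ^ 2 := (_root_.sq_abs y).symm
    nlinarith [sq_nonneg (t + k - w), hbden k]
  have hmaj_summ : Summable (fun k => 2 * (b k - b (k + 1))) := by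
    apply summable_of_sum_range_le (c := 2 * b 0)
    · intro k
      have := hbmono k
      linarith
    · intro n
      rw [← Finset.mul_sum, Finset.sum_range_sub']
      have := (hbpos n).le
      nlinarith [hbpos 0]
  -- g₂ norm bound
  have hg₂norm : ∀ k : ℕ, ‖g₂ k‖ ≤ 1 / ((t + k) ^ 2 + y ^ 2) := by
    intro k
    rw [hg₂]
    simp only [norm_div, norm_one, norm_mul]
    apply one_div_le_one_div_of_le (hcpos k)
    rw [← hnorm_sq k, pow_two]
    exact mul_le_mul_of_nonneg_left (hnorm_mono k (k + 1) (by omega)) (hnorm_pos k).le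
  have hcsucc : ∀ k : ℕ, 1 / ((t + ((k+1:ℕ) : ℝ)) ^ 2 + y ^ 2) ≤ 1 / ((t + k) ^ 2 + y ^ 2) := by
    intro k
    apply one_div_le_one_div_of_le (hcpos k)
    push_cast
    nlinarith [Nat.cast_nonneg (α := ℝ) k]
  -- bounds on the telescoped pieces
  have he₁_bound : ∀ k : ℕ, ‖g₁ k - g₁ (k + 1)‖ ≤ 2 * (b k - b (k + 1)) := by
    intro k
    have e : g₁ k - g₁ (k + 1) = g₂ k := by
      rw [hg₁, hg₂]
      simp only
      rw [div_sub_div _ _ (hzk_ne k) (hzk_ne (k + 1))]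
      congr 1
      push_cast; ring
    rw [e]
    exact (hg₂norm k).trans (hmaj k)
  have he₂_bound : ∀ k : ℕ, ‖g₂ k - g₂ (k + 1)‖ ≤ 2 * (2 * (b k - b (k + 1))) := by
    intro k
    calc ‖g₂ k - g₂ (k + 1)‖ ≤ ‖g₂ k‖ + ‖g₂ (k + 1)‖ := norm_sub_le _ _
      _ ≤ 1 / ((t + k) ^ 2 + y ^ 2) + 1 / ((t + k) ^ 2 + y ^ 2) := by
          gcongr
          · exact hg₂norm k
          · exact (hg₂norm (k + 1)).trans (hcsucc k)
      _ = 2 * (1 / ((t + k) ^ 2 + y ^ 2)) := by ring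
      _ ≤ 2 * (2 * (b k - b (k + 1))) := by
          have := hmaj k; linarith
  have hr2pos : 0 < t ^ 2 + y ^ 2 := by positivity
  have hcge : ∀ k : ℕ, t ^ 2 + y ^ 2 ≤ (t + k) ^ 2 + y ^ 2 := by
    intro k
    nlinarith [Nat.cast_nonneg (α := ℝ) k]
  have hh_bound : ∀ k : ℕ, ‖h k‖ ≤ (2 / (t ^ 2 + y ^ 2)) * (2 * (b k - b (k + 1))) := by
    intro k
    have hnormh : ‖h k‖ = 2 / (‖z + (k:ℂ)‖ ^ 2 * ‖z + ((k+1:ℕ):ℂ)‖ * ‖z + ((k+2:ℕ):ℂ)‖) := by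
      rw [hh]
      simp only
      rw [norm_div, norm_mul, norm_mul, norm_pow]
      norm_num
    have hd : ((t + k) ^ 2 + y ^ 2) ^ 2
        ≤ ‖z + (k:ℂ)‖ ^ 2 * ‖z + ((k+1:ℕ):ℂ)‖ * ‖z + ((k+2:ℕ):ℂ)‖ := by
      have m1 := hnorm_mono k (k + 1) (by omega)
      have m2 := hnorm_mono k (k + 2) (by omega)
      have p := hnorm_pos k
      have hmm : ‖z + (k:ℂ)‖ * ‖z + (k:ℂ)‖ ≤ ‖z + ((k+1:ℕ):ℂ)‖ * ‖z + ((k+2:ℕ):ℂ)‖ :=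
        mul_le_mul m1 m2 p.le (p.le.trans m1)
      calc ((t + k) ^ 2 + y ^ 2) ^ 2
          = ‖z + (k:ℂ)‖ ^ 2 * (‖z + (k:ℂ)‖ * ‖z + (k:ℂ)‖) := by rw [← hnorm_sq k]; ring
        _ ≤ ‖z + (k:ℂ)‖ ^ 2 * (‖z + ((k+1:ℕ):ℂ)‖ * ‖z + ((k+2:ℕ):ℂ)‖) :=
            mul_le_mul_of_nonneg_left hmm (sq_nonneg _)
        _ = ‖z + (k:ℂ)‖ ^ 2 * ‖z + ((k+1:ℕ):ℂ)‖ * ‖z + ((k+2:ℕ):ℂ)‖ := by ring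
    have step1 : ‖h k‖ ≤ 2 / ((t + k) ^ 2 + y ^ 2) ^ 2 := by
      rw [hnormh]
      apply div_le_div_of_nonneg_left (by norm_num) (by positivity) hd
    have step2 : 2 / ((t + k) ^ 2 + y ^ 2) ^ 2
        ≤ (2 / (t ^ 2 + y ^ 2)) * (2 * (b k - b (k + 1))) := by
      have e1 : 1 / ((t + k) ^ 2 + y ^ 2) ≤ 1 / (t ^ 2 + y ^ 2) :=
        one_div_le_one_div_of_le hr2pos (hcge k)
      have e2 := hmaj k
      have p1 : 0 < 1 / ((t + k) ^ 2 + y ^ 2) := one_div_pos.mpr (hcpos k)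
      have key : (1 / ((t + k) ^ 2 + y ^ 2)) * (1 / ((t + k) ^ 2 + y ^ 2))
          ≤ (1 / (t ^ 2 + y ^ 2)) * (2 * (b k - b (k + 1))) :=
        mul_le_mul e1 e2 p1.le (by positivity)
      calc 2 / ((t + k) ^ 2 + y ^ 2) ^ 2
          = 2 * ((1 / ((t + k) ^ 2 + y ^ 2)) * (1 / ((t + k) ^ 2 + y ^ 2))) := by
            rw [one_div_mul_one_div, ← pow_two, mul_one_div]
        _ ≤ 2 * ((1 / (t ^ 2 + y ^ 2)) * (2 * (b k - b (k + 1)))) := by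
            have := key; linarith
        _ = (2 / (t ^ 2 + y ^ 2)) * (2 * (b k - b (k + 1))) := by ring
    exact step1.trans step2
  -- summabilities
  have hsumm_e₁ : Summable (fun k => g₁ k - g₁ (k + 1)) :=
    Summable.of_norm_bounded hmaj_summ he₁_bound
  have hsumm_e₂ : Summable (fun k => g₂ k - g₂ (k + 1)) :=
    Summable.of_norm_bounded (hmaj_summ.mul_left 2) he₂_bound
  have hsumm_h : Summable h :=
    Summable.of_norm_bounded (hmaj_summ.mul_left (2 / (t ^ 2 + y ^ 2))) hh_bound
  have hsumm_hn : Summable (fun k => ‖h k‖) :=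
    Summable.of_nonneg_of_le (fun k => norm_nonneg _) hh_bound
      (hmaj_summ.mul_left (2 / (t ^ 2 + y ^ 2)))
  -- limits
  have htend_norm : Filter.Tendsto (fun k : ℕ => ‖z + (k:ℂ)‖) Filter.atTop Filter.atTop := by
    refine Filter.tendsto_atTop_mono (fun k => ?_) tendsto_natCast_atTop_atTop
    have h1 : (z + (k:ℂ)).re ≤ ‖z + (k:ℂ)‖ := Complex.re_le_norm _
    rw [hre] at h1
    linarith
  have htend_inv : Filter.Tendsto (fun k : ℕ => ‖z + (k:ℂ)‖⁻¹) Filter.atTop (nhds 0) :=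
    htend_norm.inv_tendsto_atTop
  have hg₁0 : Filter.Tendsto g₁ Filter.atTop (nhds 0) := by
    rw [tendsto_zero_iff_norm_tendsto_zero]
    have e : (fun k => ‖g₁ k‖) = fun k : ℕ => ‖z + (k:ℂ)‖⁻¹ := by
      funext k; rw [hg₁]; simp [norm_div, one_div]
    rw [e]; exact htend_inv
  have hg₂0 : Filter.Tendsto g₂ Filter.atTop (nhds 0) := by
    rw [tendsto_zero_iff_norm_tendsto_zero]
    apply squeeze_zero (fun k => norm_nonneg _) ?_ htend_inv
    intro k
    rw [hg₂]
    simp only [one_div, norm_inv, norm_mul]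
    apply inv_anti₀ (hnorm_pos k)
    nlinarith [hnorm_one (k + 1), hnorm_pos k]
  -- hasSums
  have hs1 : HasSum (fun k => g₁ k - g₁ (k + 1)) (g₁ 0) := hasSum_telescope_aux hg₁0 hsumm_e₁
  have hs2 : HasSum (fun k => g₂ k - g₂ (k + 1)) (g₂ 0) := hasSum_telescope_aux hg₂0 hsumm_e₂
  have hs2' : HasSum (fun k => (1/2 : ℂ) * (g₂ k - g₂ (k + 1))) ((1/2 : ℂ) * g₂ 0) :=
    hs2.mul_left _
  have hsh : HasSum h (∑' k, h k) := hsumm_h.hasSum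
  have hcomb := (hs1.add hs2').add hsh
  have hfun : (fun k => ((g₁ k - g₁ (k + 1)) + (1/2 : ℂ) * (g₂ k - g₂ (k + 1))) + h k)
      = fun k : ℕ => 1 / (z + (k:ℂ)) ^ 2 := by
    funext k
    have hne1 : z + (k:ℂ) + 1 ≠ 0 := by rw [← hcast1]; exact hzk_ne (k + 1)
    have hne2 : z + (k:ℂ) + 2 ≠ 0 := by rw [← hcast2]; exact hzk_ne (k + 2)
    have hid := key_id (z + (k:ℂ)) (hzk_ne k) hne1 hne2
    rw [hg₁, hg₂, hh]
    simp only
    push_cast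
    rw [show z + ((k:ℂ) + 1) = z + (k:ℂ) + 1 from by ring,
      show z + ((k:ℂ) + 1 + 1) = z + (k:ℂ) + 2 from by ring,
      show z + ((k:ℂ) + 2) = z + (k:ℂ) + 2 from by ring]
    exact hid.symm
  rw [hfun] at hcomb
  have hSval : (S 2 z) = g₁ 0 + (1/2 : ℂ) * g₂ 0 + ∑' k, h k := by
    have : S 2 z = ∑' k : ℕ, 1 / (z + (k:ℂ)) ^ 2 := rfl
    rw [this, hcomb.tsum_eq]
  -- real parts
  have hg10re : (g₁ 0).re = t / (t ^ 2 + y ^ 2) := by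
    rw [hg₁]
    simp only
    rw [one_div, Complex.inv_re, hnsq 0, hre 0]
    norm_num
  have hg20re : ((1/2 : ℂ) * g₂ 0).re ≥ -(1 / (2 * (t ^ 2 + y ^ 2))) := by
    have hu : ((z + ((0:ℕ):ℂ)) * (z + ((0+1:ℕ):ℂ))).re = t * (t + 1) - y * y := by
      rw [Complex.mul_re, hre, him, hre, him]
      push_cast; ring
    have husq : Complex.normSq ((z + ((0:ℕ):ℂ)) * (z + ((0+1:ℕ):ℂ)))
        = (t ^ 2 + y ^ 2) * ((t + 1) ^ 2 + y ^ 2) := by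
      rw [Complex.normSq_mul, hnsq, hnsq]
      push_cast; ring
    have hg20 : (g₂ 0).re = (t * (t + 1) - y * y) / ((t ^ 2 + y ^ 2) * ((t + 1) ^ 2 + y ^ 2)) := by
      rw [hg₂]
      simp only
      rw [one_div, Complex.inv_re, hu, husq]
    have hhalf : ((1/2 : ℂ) * g₂ 0).re = (g₂ 0).re / 2 := by
      rw [Complex.mul_re]
      norm_num
      ring
    rw [hhalf, hg20]
    have hB : 0 < (t + 1) ^ 2 + y ^ 2 := by positivity
    have e : (t*(t+1) - y*y)/((t^2+y^2)*((t+1)^2+y^2))/2 + 1/(2*(t^2+y^2))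
        = (t*(t+1) - y*y + ((t+1)^2+y^2)) / (2*((t^2+y^2)*((t+1)^2+y^2))) := by
      field_simp
    have hnum : (0:ℝ) ≤ t*(t+1) - y*y + ((t+1)^2+y^2) := by nlinarith
    have hpos : (0:ℝ) ≤ (t*(t+1) - y*y)/((t^2+y^2)*((t+1)^2+y^2))/2 + 1/(2*(t^2+y^2)) := by
      rw [e]
      exact div_nonneg hnum (by positivity)
    linarith
  have hTre : (∑' k, h k).re ≥ -((2 / (t ^ 2 + y ^ 2)) * (2 * b 0)) := by
    have htsum_le : ∑' k, ‖h k‖ ≤ (2 / (t ^ 2 + y ^ 2)) * (2 * b 0) := by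
      apply Summable.tsum_le_of_sum_range_le hsumm_hn
      intro n
      calc ∑ i ∈ Finset.range n, ‖h i‖
          ≤ ∑ i ∈ Finset.range n, (2 / (t ^ 2 + y ^ 2)) * (2 * (b i - b (i + 1))) :=
            Finset.sum_le_sum (fun i _ => hh_bound i)
        _ = (2 / (t ^ 2 + y ^ 2)) * (2 * (b 0 - b n)) := by
            rw [← Finset.mul_sum, ← Finset.mul_sum, Finset.sum_range_sub']
        _ ≤ (2 / (t ^ 2 + y ^ 2)) * (2 * b 0) := by
            have h1 := (hbpos n).le
            have h2 : (0:ℝ) ≤ 2 / (t ^ 2 + y ^ 2) := by positivity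
            nlinarith
    have hnormT : ‖∑' k, h k‖ ≤ (2 / (t ^ 2 + y ^ 2)) * (2 * b 0) :=
      (norm_tsum_le_tsum_norm hsumm_hn).trans htsum_le
    have habs : |(∑' k, h k).re| ≤ ‖∑' k, h k‖ := by
      exact Complex.abs_re_le_norm _
    have := (abs_le.mp habs).1
    linarith
  -- final assembly
  have hb0 : b 0 ≤ 1 / (w - 1) := by
    rw [hb]
    simp only
    apply one_div_le_one_div_of_le (by linarith)
    push_cast; linarith
  have hεw : 4 / (w - 1) < ε := by
    rw [div_lt_iff₀ (by linarith)]
    rw [div_lt_iff₀ hε] at hwε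
    nlinarith
  have h4b0 : 4 * b 0 < ε := by
    have : 4 * b 0 ≤ 4 / (w - 1) := by
      rw [div_eq_mul_one_div]
      nlinarith [hbpos 0]
    linarith
  rw [hSval]
  simp only [Complex.add_re]
  rw [hg10re]
  have hfinal : 0 < t / (t ^ 2 + y ^ 2) - 1 / (2 * (t ^ 2 + y ^ 2))
      - (2 / (t ^ 2 + y ^ 2)) * (2 * b 0) := by
    have e : t / (t ^ 2 + y ^ 2) - 1 / (2 * (t ^ 2 + y ^ 2))
        - (2 / (t ^ 2 + y ^ 2)) * (2 * b 0) = (t - 1/2 - 4 * b 0) / (t ^ 2 + y ^ 2) := by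
      field_simp
      ring
    rw [e]
    apply div_pos _ hr2pos
    linarith
  linarith [hg20re, hTre]
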